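/- The quadratic form J(p,p) = (1/(n-1))(∑_{i=1}^r p_i)^2 − ∑_{i=1}^r p_i^2/d_i on ℝ^r, where d_1,…,d_r are positive integers with n = d_1+⋯+d_r ≥ 2 and r ≥ 2, has Lorentz signature (1, r−1), i.e., it is positive on some one-dimensional subspace and negative definite on an (r−1)-dimensional complementary subspace. -/

import Mathlib

/-- The quadratic form J(p,p) = (1/(n-1))(∑ p_i)² − ∑ p_i²/d_i on ℝ^r has
Lorentz signature (1, r−1). -/
theorem lorentz_signature_J (r : ℕ) (hr : 2 ≤ r) (d : Fin r → ℕ)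
    (hd : ∀ i, 0 < d i) (hn : 2 ≤ ∑ i, d i) :
    ∃ L M : Submodule ℝ (Fin r → ℝ),
      IsCompl L M ∧ Module.finrank ℝ L = 1 ∧ Module.finrank ℝ M = r - 1 ∧
      (∀ p ∈ L, p ≠ 0 →
        0 < (1 / ((∑ i, (d i : ℝ)) - 1)) * (∑ i, p i) ^ 2
              - ∑ i, (p i) ^ 2 / (d i : ℝ)) ∧
      (∀ p ∈ M, p ≠ 0 →
        (1 / ((∑ i, (d i : ℝ)) - 1)) * (∑ i, p i) ^ 2
              - ∑ i, (p i) ^ 2 / (d i : ℝ) < 0) := by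
  set n : ℝ := ∑ i, (d i : ℝ) with hn_def
  have hn2 : (2 : ℝ) ≤ n := by
    have : ((2 : ℕ) : ℝ) ≤ ((∑ i, d i : ℕ) : ℝ) := Nat.cast_le.mpr hn
    simpa [hn_def, Nat.cast_sum] using this
  have hn1 : (1 : ℝ) < n := lt_of_lt_of_le one_lt_two hn2
  have hn0 : (0 : ℝ) < n := lt_trans one_pos hn1
  have hnne : n ≠ 0 := ne_of_gt hn0
  set v : Fin r → ℝ := fun i => (d i : ℝ) with hv_def
  have hv0 : v ≠ 0 := by
    intro h
    have := congrFun h ⟨0, lt_of_lt_of_le two_pos hr⟩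
    have hd0 := hd ⟨0, lt_of_lt_of_le two_pos hr⟩
    simp [hv_def] at this
    omega
  set f : (Fin r → ℝ) →ₗ[ℝ] ℝ := ∑ i, LinearMap.proj i with hf_def
  have hf_apply : ∀ p : Fin r → ℝ, f p = ∑ i, p i := by
    intro p
    simp [hf_def, LinearMap.sum_apply]
  have hfv : f v = n := by simp [hf_apply, hv_def, hn_def]
  refine ⟨Submodule.span ℝ {v}, LinearMap.ker f, ?_, ?_, ?_, ?_, ?_⟩
  · constructor
    · rw [Submodule.disjoint_def]
      intro x hx hxk
      obtain ⟨c, rfl⟩ := Submodule.mem_span_singleton.mp hx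
      have : c * n = 0 := by
        have := LinearMap.mem_ker.mp hxk
        simpa [hfv] using this
      rcases mul_eq_zero.mp this with h | h
      · simp [h]
      · exact absurd h hnne
    · rw [codisjoint_iff, eq_top_iff]
      intro p _
      rw [Submodule.mem_sup]
      refine ⟨(f p / n) • v, Submodule.smul_mem _ _ (Submodule.mem_span_singleton_self v),
        p - (f p / n) • v, ?_, by abel⟩
      rw [LinearMap.mem_ker]
      simp [hfv]
      field_simp
      ring
  · exact finrank_span_singleton hv0
  · have hsurj : LinearMap.range f = ⊤ := by
      rw [LinearMap.range_eq_top]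
      intro c
      exact ⟨(c / n) • v, by simp [hfv]; field_simp⟩
    have := LinearMap.finrank_range_add_finrank_ker f
    rw [hsurj] at this
    rw [finrank_top] at this
    simp at this
    omega
  · intro p hp hp0
    obtain ⟨c, rfl⟩ := Submodule.mem_span_singleton.mp hp
    have hc : c ≠ 0 := by
      intro h; exact hp0 (by simp [h])
    have h1 : ∑ i, (c • v) i = c * n := by
      simp [hv_def, hn_def, Finset.mul_sum]
    have h2 : ∑ i, ((c • v) i) ^ 2 / (d i : ℝ) = c ^ 2 * n := by
      rw [hn_def, Finset.mul_sum]
      refine Finset.sum_congr rfl fun i _ => ?_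
      have : ((d i : ℝ)) ≠ 0 := (Nat.cast_pos.mpr (hd i)).ne'
      field_simp [hv_def]
      simp only [Pi.smul_apply, smul_eq_mul, hv_def]
      ring
    rw [h1, h2]
    have h3 : n - 1 ≠ 0 := sub_ne_zero.mpr (ne_of_gt hn1)
    have h3' : 0 < n - 1 := by linarith
    have key : 1 / (n - 1) * (c * n) ^ 2 - c ^ 2 * n = c ^ 2 * n / (n - 1) := by
      field_simp
      ring
    rw [key]
    have hc2 : 0 < c ^ 2 := lt_of_le_of_ne (sq_nonneg c) (Ne.symm (pow_ne_zero 2 hc))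
    exact div_pos (mul_pos hc2 hn0) h3'
  · intro p hp hp0
    have hsum : ∑ i, p i = 0 := by
      have := LinearMap.mem_ker.mp hp
      simpa [hf_apply] using this
    rw [hsum]
    have hpos : 0 < ∑ i, (p i) ^ 2 / (d i : ℝ) := by
      obtain ⟨j, hj⟩ : ∃ j, p j ≠ 0 := by
        by_contra h
        push_neg at h
        exact hp0 (funext h)
      refine Finset.sum_pos' (fun i _ => by positivity) ⟨j, Finset.mem_univ j, ?_⟩
      have : (0:ℝ) < (d j : ℝ) := by exact_mod_cast hd j
      positivity
    nlinarith [hpos]
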